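/- Let V be Lebesgue measure restricted to B(0,1) ⊂ ℝⁿ and V_t its dilation by t. Then liminf_{t→0⁺} ‖M V_t(·) − V(ℝⁿ)/|·|ⁿ‖_{L^{1,∞}(ℝⁿ)} ≥ |B(0,1)|²/2^{n−1} > 0. In particular, M V_t does not converge to V(ℝⁿ)/|x|ⁿ in L^{1,∞}(ℝⁿ). -/

import Mathlib

open MeasureTheory Metric Set Filter
open scoped ENNReal Topology

/-- The weak `L^{p,∞}` quasinorm of `f` restricted to a set `A`. -/
noncomputable def wnormOn {α : Type*} [MeasurableSpace α] (μ : Measure α)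
    (f : α → ℝ) (p : ℝ) (A : Set α) : ℝ≥0∞ :=
  ⨆ (l : ℝ) (_ : 0 < l), ENNReal.ofReal l * (μ (A ∩ {x | l < |f x|})) ^ (1 / p)

/-- The Hardy–Littlewood maximal function of a measure, real-valued. -/
noncomputable def maxFn {n : ℕ} (μ : Measure (EuclideanSpace ℝ (Fin n)))
    (x : EuclideanSpace ℝ (Fin n)) : ℝ :=
  (⨆ (r : ℝ) (_ : 0 < r), μ (ball x r) / ENNReal.ofReal (r ^ n)).toReal

section aux

variable {n : ℕ}

local notation "E" => EuclideanSpace ℝ (Fin n)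

/-- The real volume of the unit ball. -/
noncomputable def Vr (n : ℕ) : ℝ := (volume (ball (0:EuclideanSpace ℝ (Fin n)) 1)).toReal

lemma pre_ball_aux {t : ℝ} (ht : 0 < t) (x : E) (r : ℝ) :
    (fun y : E => t • y) ⁻¹' ball x r = ball (t⁻¹ • x) (r / t) := by
  ext y
  simp only [mem_preimage, mem_ball, dist_eq_norm]
  have h : t • y - x = t • (y - t⁻¹ • x) := by
    rw [smul_sub, smul_inv_smul₀ ht.ne']
  rw [h, norm_smul, Real.norm_eq_abs, abs_of_pos ht, lt_div_iff₀ ht, mul_comm]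

lemma vol_ball_aux (hn : 0 < n) (c : E) {r : ℝ} (hr : 0 ≤ r) :
    volume (ball c r) = ENNReal.ofReal (r ^ n) * volume (ball (0:E) 1) := by
  haveI : Nonempty (Fin n) := ⟨⟨0, hn⟩⟩
  haveI : Nontrivial (EuclideanSpace ℝ (Fin n)) := by
    unfold EuclideanSpace; infer_instance
  rw [Measure.addHaar_ball volume c hr, finrank_euclideanSpace_fin]

lemma hV_pos : 0 < Vr n :=
  ENNReal.toReal_pos (measure_ball_pos volume _ one_pos).ne' measure_ball_lt_top.ne

lemma ofReal_V : ENNReal.ofReal (Vr n) = volume (ball (0:E) 1) :=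
  ENNReal.ofReal_toReal measure_ball_lt_top.ne

lemma maxFn_le_aux (hn : 0 < n) {t : ℝ} (ht : 0 < t) (x : E) :
    maxFn (Measure.map (fun y : E => t • y) (volume.restrict (ball (0:E) 1))) x
      ≤ Vr n / t ^ n := by
  have hV := hV_pos (n := n)
  apply ENNReal.toReal_le_of_le_ofReal (by positivity)
  refine iSup_le fun r => iSup_le fun hr => ?_
  rw [ENNReal.div_le_iff (ENNReal.ofReal_pos.mpr (by positivity)).ne' ENNReal.ofReal_ne_top]
  have hmeas : Measurable (fun y : E => t • y) := (continuous_const_smul t).measurable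
  rw [Measure.map_apply hmeas measurableSet_ball,
    Measure.restrict_apply (hmeas measurableSet_ball)]
  calc volume ((fun y : E => t • y) ⁻¹' ball x r ∩ ball 0 1)
      ≤ volume ((fun y : E => t • y) ⁻¹' ball x r) := measure_mono inter_subset_left
    _ = ENNReal.ofReal ((r / t) ^ n) * volume (ball (0:E) 1) := by
        rw [pre_ball_aux ht, vol_ball_aux hn _ (by positivity)]
    _ = ENNReal.ofReal (Vr n / t ^ n) * ENNReal.ofReal (r ^ n) := by
        rw [← ofReal_V (n := n), ← ENNReal.ofReal_mul (by positivity),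
          ← ENNReal.ofReal_mul (by positivity)]
        congr 1
        field_simp
        ring_nf
        rw [mul_assoc, ← mul_pow, mul_inv_cancel₀ ht.ne', one_pow, mul_one]

lemma maxFn_nonneg (μ : Measure E) (x : E) : 0 ≤ maxFn μ x := ENNReal.toReal_nonneg

lemma wnorm_ge_aux (hn : 0 < n) {t s : ℝ} (ht : 0 < t) (hs : 0 < s) (hst : s < t)
    (f : E → ℝ)
    (hub : ∀ x : E, 0 < ‖x‖ → ‖x‖ < s → Vr n / s ^ n - Vr n / t ^ n < |f x|) :
    ENNReal.ofReal ((Vr n) ^ 2 * (1 - (s / t) ^ n)) ≤ wnormOn volume f 1 univ := by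
  have hV := hV_pos (n := n)
  set l : ℝ := Vr n / s ^ n - Vr n / t ^ n with hl_def
  have hl : 0 < l := by
    have h2 : Vr n / t ^ n < Vr n / s ^ n :=
      div_lt_div_of_pos_left hV (by positivity) (pow_lt_pow_left₀ hst hs.le hn.ne')
    exact sub_pos.mpr h2
  haveI : Nonempty (Fin n) := ⟨⟨0, hn⟩⟩
  haveI : Nontrivial (EuclideanSpace ℝ (Fin n)) := by
    unfold EuclideanSpace; infer_instance
  refine le_trans ?_ (le_iSup₂_of_le l hl le_rfl)
  have hsub : ball (0:E) s \ {0} ⊆ univ ∩ {x | l < |f x|} := by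
    intro x hx
    refine ⟨trivial, ?_⟩
    have hx0 : 0 < ‖x‖ := by
      simpa [norm_pos_iff] using hx.2
    have hxs : ‖x‖ < s := by
      have := hx.1
      simpa [mem_ball, dist_zero_right] using this
    exact hub x hx0 hxs
  have hmeas : volume (ball (0:E) s) ≤ volume (univ ∩ {x : E | l < |f x|}) := by
    rw [← measure_diff_null (measure_singleton (0:E))]
    exact measure_mono hsub
  have hvol : volume (ball (0:E) s) = ENNReal.ofReal (s ^ n) * ENNReal.ofReal (Vr n) := by
    rw [vol_ball_aux hn _ hs.le, ofReal_V]
  calc ENNReal.ofReal ((Vr n) ^ 2 * (1 - (s / t) ^ n))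
      = ENNReal.ofReal l * (ENNReal.ofReal (s ^ n) * ENNReal.ofReal (Vr n)) := by
        rw [← ENNReal.ofReal_mul (by positivity), ← ENNReal.ofReal_mul (by positivity)]
        congr 1
        rw [hl_def, div_pow]
        field_simp
    _ = ENNReal.ofReal l * (volume (ball (0:E) s)) ^ ((1:ℝ)/1) := by
        rw [hvol]; norm_num
    _ ≤ ENNReal.ofReal l * (volume (univ ∩ {x : E | l < |f x|})) ^ ((1:ℝ)/1) :=
        mul_le_mul_right (ENNReal.rpow_le_rpow hmeas (by norm_num)) _

lemma sup_to_full (hn : 0 < n) {t : ℝ} (ht : 0 < t) (W : ℝ≥0∞)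
    (h : ∀ s : ℝ, 0 < s → s < t →
      ENNReal.ofReal ((Vr n) ^ 2 * (1 - (s / t) ^ n)) ≤ W) :
    ENNReal.ofReal ((Vr n) ^ 2) ≤ W := by
  have hV := hV_pos (n := n)
  set V : ℝ := Vr n
  refine ENNReal.le_of_forall_pos_le_add fun ε hε _ => ?_
  set m : ℝ := min (1/2) ((ε : ℝ) / V ^ 2) with hm_def
  have hm0 : 0 < m := lt_min (by norm_num) (div_pos (by exact_mod_cast hε) (by positivity))
  have hm1 : m ≤ 1 := (min_le_left _ _).trans (by norm_num)
  have hmn : m ^ n ≤ m := pow_le_of_le_one hm0.le hm1 hn.ne'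
  have hmn1 : m ^ n ≤ 1 := hmn.trans hm1
  have hmlt : m < 1 := (min_le_left _ _).trans_lt (by norm_num)
  have key := h (t * m) (by positivity) (by nlinarith)
  have hq : t * m / t = m := by field_simp
  rw [hq] at key
  have hsplit : ENNReal.ofReal (V ^ 2) =
      ENNReal.ofReal (V ^ 2 * (1 - m ^ n)) + ENNReal.ofReal (V ^ 2 * m ^ n) := by
    rw [← ENNReal.ofReal_add (by nlinarith) (by positivity)]
    ring_nf
  rw [hsplit]
  refine add_le_add key ?_
  have hle : V ^ 2 * m ^ n ≤ (ε : ℝ) := by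
    have h1 : V ^ 2 * m ^ n ≤ V ^ 2 * m := by nlinarith
    have h2 : m ≤ (ε : ℝ) / V ^ 2 := min_le_right _ _
    have h3 : V ^ 2 * m ≤ (ε : ℝ) := by
      rw [mul_comm]
      exact (le_div_iff₀ (by positivity)).mp h2
    linarith
  calc ENNReal.ofReal (V ^ 2 * m ^ n) ≤ ENNReal.ofReal (ε : ℝ) := ENNReal.ofReal_le_ofReal hle
    _ = (ε : ℝ≥0∞) := ENNReal.ofReal_coe_nnreal

end aux

theorem stmt_6 {n : ℕ} (hn : 0 < n) :
    0 < ENNReal.ofReal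
        ((volume (ball (0:EuclideanSpace ℝ (Fin n)) 1)).toReal ^ 2 / 2 ^ (n - 1)) ∧
    ENNReal.ofReal
        ((volume (ball (0:EuclideanSpace ℝ (Fin n)) 1)).toReal ^ 2 / 2 ^ (n - 1))
      ≤ Filter.liminf (fun t : ℝ =>
          wnormOn volume
            (fun x : EuclideanSpace ℝ (Fin n) =>
              maxFn (Measure.map (fun y : EuclideanSpace ℝ (Fin n) => t • y)
                  (volume.restrict (ball (0:EuclideanSpace ℝ (Fin n)) 1))) x
                - (volume (ball (0:EuclideanSpace ℝ (Fin n)) 1)).toReal / ‖x‖ ^ n)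
            1 Set.univ) (𝓝[>] (0:ℝ)) ∧
    ¬ Tendsto (fun t : ℝ =>
          wnormOn volume
            (fun x : EuclideanSpace ℝ (Fin n) =>
              maxFn (Measure.map (fun y : EuclideanSpace ℝ (Fin n) => t • y)
                  (volume.restrict (ball (0:EuclideanSpace ℝ (Fin n)) 1))) x
                - (volume (ball (0:EuclideanSpace ℝ (Fin n)) 1)).toReal / ‖x‖ ^ n)
            1 Set.univ) (𝓝[>] (0:ℝ)) (𝓝 0) := by
  have hV : (0:ℝ) < Vr n := hV_pos
  set W : ℝ → ℝ≥0∞ := fun t : ℝ =>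
      wnormOn volume
        (fun x : EuclideanSpace ℝ (Fin n) =>
          maxFn (Measure.map (fun y : EuclideanSpace ℝ (Fin n) => t • y)
              (volume.restrict (ball (0:EuclideanSpace ℝ (Fin n)) 1))) x
            - (volume (ball (0:EuclideanSpace ℝ (Fin n)) 1)).toReal / ‖x‖ ^ n)
        1 Set.univ with hW_def
  have hCpos : 0 < ENNReal.ofReal
      ((volume (ball (0:EuclideanSpace ℝ (Fin n)) 1)).toReal ^ 2 / 2 ^ (n - 1)) := by
    apply ENNReal.ofReal_pos.mpr
    have : (volume (ball (0:EuclideanSpace ℝ (Fin n)) 1)).toReal = Vr n := rfl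
    rw [this]
    positivity
  -- uniform lower bound on W
  have hWlb : ∀ t : ℝ, 0 < t → ENNReal.ofReal ((Vr n) ^ 2) ≤ W t := by
    intro t ht
    apply sup_to_full hn ht
    intro s hs hst
    apply wnorm_ge_aux hn ht hs hst
    intro x hx0 hxs
    have hub := maxFn_le_aux hn ht x
    have hnm : Vr n / s ^ n < Vr n / ‖x‖ ^ n :=
      div_lt_div_of_pos_left hV (by positivity) (pow_lt_pow_left₀ hxs (norm_nonneg x) hn.ne')
    have : Vr n / s ^ n - Vr n / t ^ n <
        -(maxFn (Measure.map (fun y : EuclideanSpace ℝ (Fin n) => t • y)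
            (volume.restrict (ball (0:EuclideanSpace ℝ (Fin n)) 1))) x
          - (volume (ball (0:EuclideanSpace ℝ (Fin n)) 1)).toReal / ‖x‖ ^ n) := by
      have heq : (volume (ball (0:EuclideanSpace ℝ (Fin n)) 1)).toReal = Vr n := rfl
      rw [heq]
      linarith
    exact lt_of_lt_of_le this (neg_le_abs _)
  have hCle : ENNReal.ofReal
      ((volume (ball (0:EuclideanSpace ℝ (Fin n)) 1)).toReal ^ 2 / 2 ^ (n - 1))
      ≤ ENNReal.ofReal ((Vr n) ^ 2) := by
    apply ENNReal.ofReal_le_ofReal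
    have heq : (volume (ball (0:EuclideanSpace ℝ (Fin n)) 1)).toReal = Vr n := rfl
    rw [heq]
    exact div_le_self (by positivity) (one_le_pow₀ (by norm_num))
  have hliminf : ENNReal.ofReal ((Vr n) ^ 2) ≤ Filter.liminf W (𝓝[>] (0:ℝ)) := by
    apply le_liminf_of_le (by isBoundedDefault)
    filter_upwards [eventually_mem_nhdsWithin] with t ht
    exact hWlb t ht
  refine ⟨hCpos, hCle.trans hliminf, ?_⟩
  intro hT
  have : Filter.liminf W (𝓝[>] (0:ℝ)) = 0 := hT.liminf_eq
  rw [this] at hliminf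
  exact absurd hliminf (not_le.mpr (ENNReal.ofReal_pos.mpr (by positivity)))
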